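/- For every t ∈ (−1, 1), the derivative of the function t ↦ exp(1/(t² − 1)) at t equals −2t/((t² − 1)²) · exp(1/(t² − 1)). Consequently, with K = ∫_{-1}^{1} exp(1/(t²−1)) dt, for every continuously differentiable f : ℝ → ℝ and every x₀ ∈ ℝ, f'(x₀) = lim_{h → 0⁺} (2/(hK)) ∫_{-1}^{1} ( t/((t−1)²(t+1)²) ) · exp(1/(t² − 1)) · f(x₀ + h t) dt. -/

import Mathlib

open Filter Topology intervalIntegral Set


noncomputable def bw (t : ℝ) : ℝ := Real.exp (1 / (t ^ 2 - 1))
noncomputable def bk (t : ℝ) : ℝ := t / (t ^ 2 - 1) ^ 2 * bw t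
noncomputable def bG (t : ℝ) : ℝ := if t ∈ Ioo (-1 : ℝ) 1 then -t / 2 * bw t else 0

lemma bk_deriv (t : ℝ) (ht : t ∈ Ioo (-1 : ℝ) 1) :
    HasDerivAt (fun s : ℝ => Real.exp (1 / (s ^ 2 - 1)))
      (-2 * t / (t ^ 2 - 1) ^ 2 * Real.exp (1 / (t ^ 2 - 1))) t := by
  obtain ⟨h1, h2⟩ := ht
  have hne : t ^ 2 - 1 ≠ 0 := by nlinarith
  have hs : HasDerivAt (fun s : ℝ => s ^ 2 - 1) (2 * t) t := by
    simpa using ((hasDerivAt_pow 2 t).sub_const 1)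
  have hinv : HasDerivAt (fun s : ℝ => (s ^ 2 - 1)⁻¹) (-(2 * t) / (t ^ 2 - 1) ^ 2) t :=
    hs.inv hne
  have := hinv.exp
  simp only [one_div]
  convert this using 1
  ring

lemma exp_sq_bound {u : ℝ} (hu : u ≤ 0) : u ^ 2 * Real.exp u ≤ 4 := by
  have h1 : -u / 2 + 1 ≤ Real.exp (-u / 2) := Real.add_one_le_exp _
  have h2 : Real.exp u * (Real.exp (-u / 2) * Real.exp (-u / 2)) = 1 := by
    rw [← Real.exp_add, ← Real.exp_add]
    norm_num
  have h3 : (0 : ℝ) < Real.exp (-u / 2) := Real.exp_pos _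
  have h4 : (0 : ℝ) < Real.exp u := Real.exp_pos _
  have hb : -u / 2 ≤ Real.exp (-u / 2) := by linarith
  have hb0 : (0 : ℝ) ≤ -u / 2 := by linarith
  have hbsq : u ^ 2 / 4 ≤ Real.exp (-u / 2) ^ 2 := by nlinarith
  nlinarith [sq_nonneg (Real.exp (-u / 2))]

lemma bk_bound {t : ℝ} (ht : t ∈ Icc (-1 : ℝ) 1) : |bk t| ≤ 4 := by
  obtain ⟨h1, h2⟩ := ht
  by_cases h : t ^ 2 - 1 = 0
  · simp [bk, h]
  · have hlt : t ^ 2 - 1 < 0 := lt_of_le_of_ne (by nlinarith) h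
    set u := 1 / (t ^ 2 - 1) with hu
    have hu0 : u ≤ 0 := le_of_lt (by
      rw [hu]
      exact one_div_neg.mpr hlt)
    have hk : bk t = t * (u ^ 2 * Real.exp u) := by
      rw [bk, bw, hu]
      rw [div_pow]
      ring
    have h5 : 0 ≤ u ^ 2 * Real.exp u := by positivity
    rw [hk, abs_mul, abs_of_nonneg h5]
    have ht1 : |t| ≤ 1 := abs_le.mpr ⟨h1, h2⟩
    calc |t| * (u ^ 2 * Real.exp u) ≤ 1 * 4 :=
          mul_le_mul ht1 (exp_sq_bound hu0) h5 (by norm_num)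
      _ = 4 := by norm_num

lemma bw_bound {t : ℝ} (ht : t ∈ Icc (-1 : ℝ) 1) : bw t ≤ 1 := by
  obtain ⟨h1, h2⟩ := ht
  have : 1 / (t ^ 2 - 1) ≤ 0 := by
    by_cases h : t ^ 2 - 1 = 0
    · simp [h]
    · exact le_of_lt (one_div_neg.mpr (lt_of_le_of_ne (by nlinarith) h))
  calc bw t ≤ Real.exp 0 := Real.exp_le_exp.mpr this
    _ = 1 := Real.exp_zero

lemma ii_of_bound {g : ℝ → ℝ} (hm : Measurable g) {C : ℝ}
    (hb : ∀ t ∈ Set.Ioc (-1 : ℝ) 1, ‖g t‖ ≤ C) :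
    IntervalIntegrable g MeasureTheory.volume (-1) 1 := by
  rw [intervalIntegrable_iff_integrableOn_Ioc_of_le (by norm_num)]
  refine ⟨hm.aestronglyMeasurable, MeasureTheory.HasFiniteIntegral.of_bounded (C := C) ?_⟩
  exact (MeasureTheory.ae_restrict_iff' measurableSet_Ioc).mpr (MeasureTheory.ae_of_all _ hb)

lemma bk_meas : Measurable bk := by
  unfold bk bw
  fun_prop

lemma bw_meas : Measurable bw := by
  unfold bw
  fun_prop

lemma ii_bw : IntervalIntegrable bw MeasureTheory.volume (-1) 1 := by
  apply ii_of_bound bw_meas (C := 1)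
  intro t ht
  have h1 : bw t ≤ 1 := bw_bound ⟨le_of_lt ht.1, ht.2⟩
  have h2 : 0 < bw t := Real.exp_pos _
  rw [Real.norm_eq_abs, abs_of_pos h2]
  exact h1

lemma ii_bk : IntervalIntegrable bk MeasureTheory.volume (-1) 1 := by
  apply ii_of_bound bk_meas (C := 4)
  intro t ht
  exact bk_bound ⟨le_of_lt ht.1, ht.2⟩

lemma bk_odd (t : ℝ) : bk (-t) = -bk t := by
  unfold bk bw
  ring_nf

lemma integral_bk_zero : ∫ t in (-1 : ℝ)..1, bk t = 0 := by
  have h := intervalIntegral.integral_comp_neg (a := (-1 : ℝ)) (b := 1) (f := bk)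
  simp only [neg_neg] at h
  simp_rw [bk_odd, intervalIntegral.integral_neg] at h
  linarith

lemma bG_hasDeriv {x : ℝ} (hx : x ∈ Ioo (-1 : ℝ) 1) :
    HasDerivAt bG (x * bk x - bw x / 2) x := by
  have h2 : HasDerivAt (fun t : ℝ => -t / 2) (-1 / 2) x := by
    simpa using ((hasDerivAt_id x).neg.div_const 2)
  have h1 := bk_deriv x hx
  have hmul := h2.mul h1
  have heq : bG =ᶠ[𝓝 x] fun t : ℝ => -t / 2 * Real.exp (1 / (t ^ 2 - 1)) := by
    filter_upwards [isOpen_Ioo.mem_nhds hx] with y hy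
    simp [bG, bw, hy]
  refine HasDerivAt.congr_of_eventuallyEq ?_ heq
  refine hmul.congr_deriv ?_
  unfold bk bw
  ring

lemma tendsto_bw_zero_right :
    Tendsto (fun t : ℝ => Real.exp (1 / (t ^ 2 - 1))) (𝓝[Ioo (-1 : ℝ) 1] 1) (𝓝 0) := by
  apply Real.tendsto_exp_atBot.comp
  have h1 : Tendsto (fun t : ℝ => 1 - t ^ 2) (𝓝[Ioo (-1 : ℝ) 1] 1) (𝓝[>] 0) := by
    rw [tendsto_nhdsWithin_iff]
    constructor
    · have : Tendsto (fun t : ℝ => 1 - t ^ 2) (𝓝 1) (𝓝 (1 - 1 ^ 2)) :=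
        (continuous_const.sub (continuous_pow 2)).tendsto 1
      simpa using this.mono_left nhdsWithin_le_nhds
    · filter_upwards [self_mem_nhdsWithin] with t ht
      have := ht.1; have := ht.2
      simp only [mem_Ioi]
      nlinarith
  have h2 := (tendsto_neg_atTop_atBot).comp (tendsto_inv_nhdsGT_zero.comp h1)
  convert h2 using 2 with t
  simp only [Function.comp_apply]
  rw [one_div, show t ^ 2 - 1 = -(1 - t ^ 2) by ring, inv_neg]

lemma tendsto_bw_zero_left :
    Tendsto (fun t : ℝ => Real.exp (1 / (t ^ 2 - 1))) (𝓝[Ioo (-1 : ℝ) 1] (-1)) (𝓝 0) := by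
  apply Real.tendsto_exp_atBot.comp
  have h1 : Tendsto (fun t : ℝ => 1 - t ^ 2) (𝓝[Ioo (-1 : ℝ) 1] (-1)) (𝓝[>] 0) := by
    rw [tendsto_nhdsWithin_iff]
    constructor
    · have : Tendsto (fun t : ℝ => 1 - t ^ 2) (𝓝 (-1)) (𝓝 (1 - (-1) ^ 2)) :=
        (continuous_const.sub (continuous_pow 2)).tendsto (-1)
      simpa using this.mono_left nhdsWithin_le_nhds
    · filter_upwards [self_mem_nhdsWithin] with t ht
      have := ht.1; have := ht.2
      simp only [mem_Ioi]
      nlinarith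
  have h2 := (tendsto_neg_atTop_atBot).comp (tendsto_inv_nhdsGT_zero.comp h1)
  convert h2 using 2 with t
  simp only [Function.comp_apply]
  rw [one_div, show t ^ 2 - 1 = -(1 - t ^ 2) by ring, inv_neg]

lemma bG_cont : ContinuousOn bG (Icc (-1 : ℝ) 1) := by
  have key : ∀ x : ℝ, Tendsto bG (𝓝[Ioo (-1 : ℝ) 1] x) (𝓝 0) →
      Tendsto bG (𝓝[Icc (-1 : ℝ) 1 \ {x}] x) (𝓝 0) → True := fun _ _ _ => trivial
  intro x hx
  rcases eq_or_lt_of_le hx.2 with h1 | h1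
  · -- x = 1
    have hG1 : bG x = 0 := by simp [bG, h1]
    have hmem : Ioo (-1 : ℝ) 1 ∈ 𝓝[Icc (-1 : ℝ) 1 \ {x}] x := by
      rw [h1]
      refine mem_nhdsWithin.mpr ⟨Ioi 0, isOpen_Ioi, by norm_num, ?_⟩
      rintro y ⟨hy0, ⟨hy1, hy2⟩, hy3⟩
      exact ⟨by linarith [mem_Ioi.mp hy0], lt_of_le_of_ne hy2 (by simpa using hy3)⟩
    have hform : Tendsto (fun t : ℝ => -t / 2 * Real.exp (1 / (t ^ 2 - 1)))
        (𝓝[Ioo (-1 : ℝ) 1] 1) (𝓝 0) := by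
      have hc : Tendsto (fun t : ℝ => -t / 2) (𝓝 (1:ℝ)) (𝓝 (-1 / 2)) := by
        have := ((continuous_id.neg.div_const 2)).tendsto (1:ℝ)
        simpa using this
      have := (tendsto_nhdsWithin_of_tendsto_nhds hc).mul tendsto_bw_zero_right
      simpa using this
    have htd : Tendsto bG (𝓝[Icc (-1 : ℝ) 1 \ {x}] x) (𝓝 0) := by
      rw [h1] at *
      refine ((hform.mono_left (nhdsWithin_le_of_mem hmem)).congr' ?_)
      filter_upwards [hmem] with y hy
      simp [bG, bw, hy]
    refine continuousWithinAt_diff_self.mp ?_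
    rw [ContinuousWithinAt, hG1]
    exact htd
  rcases eq_or_lt_of_le hx.1 with h2 | h2
  · -- x = -1
    have hG1 : bG x = 0 := by simp [bG, ← h2]
    have hmem : Ioo (-1 : ℝ) 1 ∈ 𝓝[Icc (-1 : ℝ) 1 \ {x}] x := by
      rw [← h2]
      refine mem_nhdsWithin.mpr ⟨Iio 0, isOpen_Iio, by norm_num, ?_⟩
      rintro y ⟨hy0, ⟨hy1, hy2⟩, hy3⟩
      exact ⟨lt_of_le_of_ne hy1 (fun h => hy3 (by simp [← h])), by linarith [mem_Iio.mp hy0]⟩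
    have hform : Tendsto (fun t : ℝ => -t / 2 * Real.exp (1 / (t ^ 2 - 1)))
        (𝓝[Ioo (-1 : ℝ) 1] (-1)) (𝓝 0) := by
      have hc : Tendsto (fun t : ℝ => -t / 2) (𝓝 (-1:ℝ)) (𝓝 (1 / 2)) := by
        have := ((continuous_id.neg.div_const 2)).tendsto (-1:ℝ)
        simpa using this
      have := (tendsto_nhdsWithin_of_tendsto_nhds hc).mul tendsto_bw_zero_left
      simpa using this
    have htd : Tendsto bG (𝓝[Icc (-1 : ℝ) 1 \ {x}] x) (𝓝 0) := by
      rw [← h2] at *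
      refine ((hform.mono_left (nhdsWithin_le_of_mem hmem)).congr' ?_)
      filter_upwards [hmem] with y hy
      simp [bG, bw, hy]
    refine continuousWithinAt_diff_self.mp ?_
    rw [ContinuousWithinAt, hG1]
    exact htd
  · -- interior
    exact ((bG_hasDeriv ⟨h2, h1⟩).continuousAt).continuousWithinAt


lemma ii_g : IntervalIntegrable (fun t => t * bk t - bw t / 2) MeasureTheory.volume (-1) 1 := by
  apply ii_of_bound ((measurable_id.mul bk_meas).sub (bw_meas.div_const 2)) (C := 5)
  intro t ht
  have h1 : |bk t| ≤ 4 := bk_bound ⟨le_of_lt ht.1, ht.2⟩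
  have h2 : bw t ≤ 1 := bw_bound ⟨le_of_lt ht.1, ht.2⟩
  have h3 : 0 < bw t := Real.exp_pos _
  have h4 : |t| ≤ 1 := abs_le.mpr ⟨le_of_lt ht.1, ht.2⟩
  have h5 : |t * bk t| ≤ 4 := by
    rw [abs_mul]
    calc |t| * |bk t| ≤ 1 * 4 := mul_le_mul h4 h1 (abs_nonneg _) (by norm_num)
      _ = 4 := by norm_num
  rw [Real.norm_eq_abs]
  calc |t * bk t - bw t / 2| ≤ |t * bk t| + |bw t / 2| := abs_sub _ _
    _ ≤ 4 + 1 := by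
        refine add_le_add h5 ?_
        rw [abs_div, abs_of_pos h3]
        simp only [abs_two]
        linarith
    _ ≤ 5 := by norm_num

lemma ftc_key : ∫ t in (-1 : ℝ)..1, (t * bk t - bw t / 2) = 0 := by
  have h := intervalIntegral.integral_eq_sub_of_hasDeriv_right_of_le (by norm_num : (-1:ℝ) ≤ 1)
    bG_cont (f' := fun t => t * bk t - bw t / 2)
    (fun x hx => (bG_hasDeriv hx).hasDerivWithinAt) ii_g
  rw [h]
  have h1 : bG 1 = 0 := by simp [bG]
  have h2 : bG (-1) = 0 := by simp [bG]
  rw [h1, h2, sub_zero]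

lemma integral_t_bk : ∫ t in (-1 : ℝ)..1, t * bk t = (∫ t in (-1 : ℝ)..1, bw t) / 2 := by
  have hsplit : (fun t : ℝ => t * bk t) = fun t => (t * bk t - bw t / 2) + bw t / 2 := by
    funext t; ring
  rw [hsplit, intervalIntegral.integral_add ii_g (ii_bw.div_const 2), ftc_key, zero_add,
    intervalIntegral.integral_div]

/-- Explicit first-derivative bump kernel: on `(−1,1)` the derivative of
`t ↦ exp(1/(t²−1))` is `−2t/((t²−1)²) · exp(1/(t²−1))`, and consequently, with
`K = ∫_{-1}^{1} exp(1/(t²−1)) dt`, for every continuously differentiable `f` and every `x₀`,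
`f'(x₀) = lim_{h→0⁺} (2/(hK)) ∫_{-1}^{1} (t/((t−1)²(t+1)²)) exp(1/(t²−1)) f(x₀+ht) dt`. -/
theorem bump_first_derivative_kernel (K : ℝ)
    (hK : K = ∫ t in (-1 : ℝ)..1, Real.exp (1 / (t ^ 2 - 1))) :
    (∀ t ∈ Ioo (-1 : ℝ) 1,
      HasDerivAt (fun s : ℝ => Real.exp (1 / (s ^ 2 - 1)))
        (-2 * t / (t ^ 2 - 1) ^ 2 * Real.exp (1 / (t ^ 2 - 1))) t) ∧
    ∀ f : ℝ → ℝ, ContDiff ℝ 1 f → ∀ x₀ : ℝ,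
      Tendsto (fun h : ℝ => (2 / (h * K)) *
          ∫ t in (-1 : ℝ)..1,
            (t / ((t - 1) ^ 2 * (t + 1) ^ 2)) * Real.exp (1 / (t ^ 2 - 1)) * f (x₀ + h * t))
        (𝓝[>] (0 : ℝ)) (𝓝 (deriv f x₀)) := by
  constructor
  · exact bk_deriv
  · intro f hf x₀
    have hdf : Continuous (deriv f) := hf.continuous_deriv le_rfl
    have hfc : Continuous f := hf.continuous
    set D := deriv f x₀ with hD
    have hKpos : 0 < K := by
      rw [hK]
      refine intervalIntegral.intervalIntegral_pos_of_pos_on ii_bw ?_ (by norm_num)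
      intro x _
      exact Real.exp_pos _
    have hK0 : K ≠ 0 := ne_of_gt hKpos
    obtain ⟨M, hM⟩ := (isCompact_Icc (a := x₀ - 1) (b := x₀ + 1)).exists_bound_of_continuousOn
      hdf.continuousOn
    have hM0 : 0 ≤ M := le_trans (norm_nonneg _)
      (hM x₀ (by constructor <;> linarith))
    -- MVT bound
    have hMVT : ∀ h ∈ Set.Ioc (0:ℝ) 1, ∀ t ∈ Set.Icc (-1:ℝ) 1,
        |f (x₀ + h * t) - f x₀| ≤ M * (h * |t|) := by
      intro h hh t ht
      have hd : ∀ y ∈ Icc (x₀ - 1) (x₀ + 1),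
          HasDerivWithinAt f (deriv f y) (Icc (x₀ - 1) (x₀ + 1)) y := fun y _ =>
        ((hf.differentiable one_ne_zero) y).hasDerivAt.hasDerivWithinAt
      have hbd : ∀ y ∈ Icc (x₀ - 1) (x₀ + 1), ‖deriv f y‖ ≤ M := hM
      have hmem : x₀ + h * t ∈ Icc (x₀ - 1) (x₀ + 1) := by
        have h1 : |h * t| ≤ 1 := by
          rw [abs_mul, abs_of_pos hh.1]
          calc h * |t| ≤ 1 * 1 := by
                refine mul_le_mul hh.2 (abs_le.mpr ⟨ht.1, ht.2⟩) (abs_nonneg _) (by norm_num)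
            _ = 1 := by norm_num
        have := abs_le.mp h1
        constructor <;> linarith [this.1, this.2]
      have hmem0 : x₀ ∈ Icc (x₀ - 1) (x₀ + 1) := by constructor <;> linarith
      have := Convex.norm_image_sub_le_of_norm_hasDerivWithin_le hd hbd (convex_Icc _ _) hmem0 hmem
      rw [Real.norm_eq_abs, Real.norm_eq_abs] at this
      calc |f (x₀ + h * t) - f x₀| ≤ M * |x₀ + h * t - x₀| := this
        _ = M * (h * |t|) := by
            rw [show x₀ + h * t - x₀ = h * t by ring, abs_mul, abs_of_pos hh.1]
    -- dominated convergence
    have hDCT : Tendsto (fun h : ℝ => ∫ t in (-1:ℝ)..1, bk t * ((f (x₀ + h * t) - f x₀) / h))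
        (𝓝[>] (0:ℝ)) (𝓝 (∫ t in (-1:ℝ)..1, bk t * (t * D))) := by
      apply intervalIntegral.tendsto_integral_filter_of_dominated_convergence
        (bound := fun _ => 4 * M)
      · filter_upwards with h
        exact (bk_meas.mul (by fun_prop)).aestronglyMeasurable
      · filter_upwards [Ioc_mem_nhdsGT_of_mem (Set.left_mem_Ico.mpr (by norm_num : (0:ℝ) < 1))]
          with h hh
        refine MeasureTheory.ae_of_all _ fun t ht => ?_
        rw [Set.uIoc_of_le (by norm_num : (-1:ℝ) ≤ 1)] at ht
        have ht' : t ∈ Icc (-1:ℝ) 1 := ⟨le_of_lt ht.1, ht.2⟩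
        have h1 : |bk t| ≤ 4 := bk_bound ht'
        have h2 : |f (x₀ + h * t) - f x₀| ≤ M * (h * |t|) := hMVT h hh t ht'
        rw [Real.norm_eq_abs, abs_mul, abs_div, abs_of_pos hh.1]
        have h3 : |f (x₀ + h * t) - f x₀| / h ≤ M := by
          rw [div_le_iff₀ hh.1]
          calc |f (x₀ + h * t) - f x₀| ≤ M * (h * |t|) := h2
            _ ≤ M * (h * 1) := by
                refine mul_le_mul_of_nonneg_left ?_ hM0
                exact mul_le_mul_of_nonneg_left (abs_le.mpr ⟨ht'.1, ht'.2⟩) (le_of_lt hh.1)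
            _ = M * h := by ring
        exact mul_le_mul h1 h3 (div_nonneg (abs_nonneg _) hh.1.le) (by norm_num)
      · exact intervalIntegrable_const
      · refine MeasureTheory.ae_of_all _ fun t _ => ?_
        have h1 : HasDerivAt f D x₀ := ((hf.differentiable one_ne_zero) x₀).hasDerivAt
        have h2 : HasDerivAt (fun h : ℝ => x₀ + h * t) t 0 := by
          simpa using ((hasDerivAt_id (0:ℝ)).mul_const t).const_add x₀
        have hd : HasDerivAt (fun h : ℝ => f (x₀ + h * t)) (D * t) 0 := by
          have := HasDerivAt.comp (0:ℝ) (by simpa using h1) h2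
          exact this
        have h3 := hd.tendsto_slope_zero_right
        simp only [zero_add, zero_mul, add_zero, smul_eq_mul] at h3
        have h4 := h3.const_mul (bk t)
        have : bk t * (D * t) = bk t * (t * D) := by ring
        rw [this] at h4
        refine h4.congr fun h => ?_
        rw [div_eq_inv_mul]
    have hlim2 : (∫ t in (-1:ℝ)..1, bk t * (t * D)) = D * (K / 2) := by
      have e : (fun t : ℝ => bk t * (t * D)) = fun t => D * (t * bk t) := by
        funext t; ring
      rw [e, intervalIntegral.integral_const_mul, integral_t_bk]
      rw [show (∫ t in (-1:ℝ)..1, bw t) = K from by rw [hK]; rfl]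
    rw [hlim2] at hDCT
    have final := hDCT.const_mul (2 / K)
    have hval : 2 / K * (D * (K / 2)) = D := by field_simp
    rw [hval] at final
    refine Filter.Tendsto.congr' ?_ final
    filter_upwards [self_mem_nhdsWithin] with h hh
    have hh0 : (0:ℝ) < h := hh
    have e1 : (∫ t in (-1:ℝ)..1,
        (t / ((t - 1) ^ 2 * (t + 1) ^ 2)) * Real.exp (1 / (t ^ 2 - 1)) * f (x₀ + h * t))
        = ∫ t in (-1:ℝ)..1, bk t * f (x₀ + h * t) := by
      congr 1
      funext t
      rw [show (t - 1) ^ 2 * (t + 1) ^ 2 = (t ^ 2 - 1) ^ 2 from by ring, bk, bw]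
    have hcontf : Continuous fun t : ℝ => f (x₀ + h * t) := hfc.comp (by fun_prop)
    obtain ⟨C, hC⟩ := (isCompact_Icc (a := (-1:ℝ)) (b := 1)).exists_bound_of_continuousOn
      hcontf.continuousOn
    have iiA : IntervalIntegrable (fun t => bk t * (f (x₀ + h * t) - f x₀))
        MeasureTheory.volume (-1) 1 := by
      apply ii_of_bound (bk_meas.mul (by fun_prop)) (C := 4 * (C + |f x₀|))
      intro t ht
      have h1 := bk_bound (⟨le_of_lt ht.1, ht.2⟩ : t ∈ Icc (-1:ℝ) 1)
      have h2 := hC t ⟨le_of_lt ht.1, ht.2⟩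
      rw [Real.norm_eq_abs, Pi.mul_apply, abs_mul]
      have h3 : |f (x₀ + h * t) - f x₀| ≤ C + |f x₀| := by
        calc |f (x₀ + h * t) - f x₀| ≤ |f (x₀ + h * t)| + |f x₀| := abs_sub _ _
          _ ≤ C + |f x₀| := by
              have := h2
              rw [Real.norm_eq_abs] at this
              linarith
      exact mul_le_mul h1 h3 (abs_nonneg _) (by norm_num)
    have iiB : IntervalIntegrable (fun t => bk t * f x₀) MeasureTheory.volume (-1) 1 :=
      ii_bk.mul_const _
    have e2 : (∫ t in (-1:ℝ)..1, bk t * f (x₀ + h * t))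
        = ∫ t in (-1:ℝ)..1, bk t * (f (x₀ + h * t) - f x₀) := by
      have e : (fun t : ℝ => bk t * f (x₀ + h * t))
          = fun t => bk t * (f (x₀ + h * t) - f x₀) + bk t * f x₀ := by
        funext t; ring
      rw [e, intervalIntegral.integral_add iiA iiB, intervalIntegral.integral_mul_const,
        integral_bk_zero, zero_mul, add_zero]
    have e3 : (∫ t in (-1:ℝ)..1, bk t * ((f (x₀ + h * t) - f x₀) / h))
        = (1 / h) * ∫ t in (-1:ℝ)..1, bk t * (f (x₀ + h * t) - f x₀) := by
      rw [← intervalIntegral.integral_const_mul]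
      congr 1
      funext t
      ring
    rw [e1, e2, e3]
    rw [show (2:ℝ) / (h * K) = 2 / K * (1 / h) from by rw [div_mul_div_comm]; ring_nf,
      mul_assoc]
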